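/- Suppose σ_1, …, σ_r satisfy property I with witnesses α_1, …, α_r. Then for every nonempty subset I ⊆ {1,…,r} one has |α_I| = |σ_I| − c(I), where α_I = ⋃_{i∈I} α_i, σ_I = ⋃_{i∈I} σ_i, and c(I) is the number of connected components of the intersection graph G_I. -/

import Mathlib

open Finset LaurentPolynomial

noncomputable section

/-- The union `σ_I = ⋃_{i ∈ I} σ_i`. -/
def unionOver {ι V : Type*} [DecidableEq V] (σ : ι → Finset V) (I : Finset ι) : Finset V :=
  I.sup σ

/-- The intersection graph `G_I` on the vertex set `I`. -/
def interGraph {ι V : Type*} [DecidableEq V] (σ : ι → Finset V) (I : Finset ι) :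
    SimpleGraph {i // i ∈ I} where
  Adj i j := i ≠ j ∧ (σ i.1 ∩ σ j.1).Nonempty
  symm := by
    constructor
    intro i j h
    exact ⟨h.1.symm, by rw [Finset.inter_comm]; exact h.2⟩
  loopless := by constructor; intro i h; exact h.1 rfl

/-- `c(I)`, the number of connected components of `G_I`. -/
def compCount {ι V : Type*} [DecidableEq V] (σ : ι → Finset V) (I : Finset ι) : ℕ :=
  Nat.card (interGraph σ I).ConnectedComponent

/-- Property I. -/
def PropertyI {ι V W : Type*} [DecidableEq V] [DecidableEq W]
    (σ : ι → Finset V) (α : ι → Finset W) : Prop :=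
  (∀ i, (α i).card + 1 = (σ i).card) ∧
  ∀ I : Finset ι, I.Nonempty → ∀ p ∉ I,
    (unionOver σ I ∩ σ p = ∅ → unionOver α I ∩ α p = ∅) ∧
    ((unionOver σ I ∩ σ p).Nonempty →
      (unionOver α I ∩ α p).card + 1 = (unionOver σ I ∩ σ p).card)

/-- The simplicial chromatic polynomial. -/
def simpChrom {ι : Type*} [Fintype ι] [DecidableEq ι] {n : ℕ} (σ : ι → Finset (Fin n)) :
    LaurentPolynomial ℤ :=
  T (n : ℤ) +
  ∑ I ∈ (univ : Finset ι).powerset.filter (fun I => I.Nonempty),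
    (-1) ^ I.card *
      T ((n : ℤ) - ((unionOver σ I).card : ℤ) + (compCount σ I : ℤ))

/-- Faces of the complex whose minimal nonfaces are the `α i`. -/
def facesOf {ι : Type*} [Fintype ι] {N : ℕ} (α : ι → Finset (Fin N)) :
    Finset (Finset (Fin N)) :=
  (univ : Finset (Finset (Fin N))).filter (fun F => ∀ i, ¬ α i ⊆ F)

/-- Coefficient of `t^k` in a Laurent polynomial. -/
def lcoeff (p : LaurentPolynomial ℤ) (k : ℤ) : ℤ := AddMonoidAlgebra.coeff p k

end

section Aux

open SimpleGraph Relation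

variable {ι V : Type*} [DecidableEq V]

/-- Ambient step relation. -/
def AStep (σ : ι → Finset V) (I : Finset ι) (x y : ι) : Prop :=
  x ∈ I ∧ y ∈ I ∧ x ≠ y ∧ (σ x ∩ σ y).Nonempty

/-- Ambient reachability. -/
def AReach (σ : ι → Finset V) (I : Finset ι) : ι → ι → Prop :=
  Relation.ReflTransGen (AStep σ I)

lemma astep_symm {σ : ι → Finset V} {I : Finset ι} : Symmetric (AStep σ I) := by
  rintro x y ⟨hx, hy, hne, hson⟩
  exact ⟨hy, hx, hne.symm, by rwa [Finset.inter_comm]⟩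

lemma areach_symm {σ : ι → Finset V} {I : Finset ι} {a b : ι}
    (h : AReach σ I a b) : AReach σ I b a :=
  by haveI : Std.Symm (AStep σ I) := ⟨fun _ _ h => astep_symm h⟩; exact Std.Symm.symm (r := Relation.ReflTransGen (AStep σ I)) _ _ h

lemma areach_of_reachable {σ : ι → Finset V} {I : Finset ι} {a b : {i // i ∈ I}}
    (h : (interGraph σ I).Reachable a b) : AReach σ I a.1 b.1 := by
  rw [SimpleGraph.reachable_iff_reflTransGen] at h
  exact Relation.ReflTransGen.lift Subtype.val
    (fun x y (hxy : (interGraph σ I).Adj x y) =>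
      (⟨x.2, y.2, fun he => hxy.1 (Subtype.ext he), hxy.2⟩ : AStep σ I x.1 y.1)) _ _ h

lemma reachable_of_areach {σ : ι → Finset V} {I : Finset ι} {a b : ι}
    (h : AReach σ I a b) (ha : a ∈ I) (hb : b ∈ I) :
    (interGraph σ I).Reachable ⟨a, ha⟩ ⟨b, hb⟩ := by
  induction h with
  | refl => rfl
  | tail hac hstep ih =>
    rename_i c d
    exact (ih hstep.1).trans
      (SimpleGraph.Adj.reachable ⟨fun he => hstep.2.2.1 (congrArg Subtype.val he), hstep.2.2.2⟩)

end Aux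

section Aux2

open SimpleGraph Relation

variable {ι V : Type*} [DecidableEq ι] [DecidableEq V]

/-- Chains avoiding an irrelevant vertex `p` live in `I.erase p`. -/
lemma areach_erase_of_not_areach {σ : ι → Finset V} {I : Finset ι} {p a b : ι}
    (h : AReach σ I a b) (hnp : ¬ AReach σ I a p) (hap : a ≠ p) :
    AReach σ (I.erase p) a b := by
  induction h with
  | refl => exact Relation.ReflTransGen.refl
  | tail hac hstep ih =>
    rename_i c d
    have hcp : c ≠ p := fun he => hnp (he ▸ hac)
    have hdp : d ≠ p := fun he => hnp (he ▸ hac.tail hstep)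
    exact (ih).tail ⟨Finset.mem_erase.mpr ⟨hcp, hstep.1⟩,
      Finset.mem_erase.mpr ⟨hdp, hstep.2.1⟩, hstep.2.2⟩

/-- When `p` is isolated, chains not starting at `p` avoid `p`. -/
lemma areach_erase_of_isolated {σ : ι → Finset V} {I : Finset ι} {p : ι}
    (hiso : ∀ q ∈ I, q ≠ p → ¬ (σ p ∩ σ q).Nonempty) {a b : ι}
    (h : AReach σ I a b) (hap : a ≠ p) :
    b ≠ p ∧ AReach σ (I.erase p) a b := by
  induction h with
  | refl => exact ⟨hap, Relation.ReflTransGen.refl⟩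
  | tail hac hstep ih =>
    rename_i c d
    obtain ⟨hcp, ih⟩ := ih
    have hdp : d ≠ p := by
      rintro rfl
      have h4 := hstep.2.2.2
      rw [Finset.inter_comm] at h4
      exact hiso c hstep.1 hcp h4
    exact ⟨hdp, ih.tail ⟨Finset.mem_erase.mpr ⟨hcp, hstep.1⟩,
      Finset.mem_erase.mpr ⟨hdp, hstep.2.1⟩, hstep.2.2⟩⟩

/-- The inclusion homomorphism from `G_{I.erase p}` to `G_I`. -/
def inclHom (σ : ι → Finset V) (I : Finset ι) (p : ι) :
    interGraph σ (I.erase p) →g interGraph σ I where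
  toFun x := ⟨x.1, Finset.mem_of_mem_erase x.2⟩
  map_rel' := by
    rintro x y ⟨hne, hson⟩
    refine ⟨fun he => hne (Subtype.ext ?_), hson⟩
    have h7 := congrArg Subtype.val he
    exact h7

lemma compCount_erase_isolated {σ : ι → Finset V} {I : Finset ι} {p : ι}
    (hp : p ∈ I) (hne : (I.erase p).Nonempty)
    (hiso : ∀ q ∈ I, q ≠ p → ¬ (σ p ∩ σ q).Nonempty) :
    compCount σ I = compCount σ (I.erase p) + 1 := by
  classical
  set F := SimpleGraph.ConnectedComponent.map (inclHom σ I p) with hF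
  let g : (interGraph σ (I.erase p)).ConnectedComponent ⊕ Unit →
      (interGraph σ I).ConnectedComponent :=
    Sum.elim F (fun _ => (interGraph σ I).connectedComponentMk ⟨p, hp⟩)
  have hFinj : ∀ (x y : {i // i ∈ I.erase p}),
      F ((interGraph σ (I.erase p)).connectedComponentMk x) =
        (interGraph σ I).connectedComponentMk ⟨y.1, Finset.mem_of_mem_erase y.2⟩ →
      (interGraph σ (I.erase p)).connectedComponentMk x =
        (interGraph σ (I.erase p)).connectedComponentMk y := by
    intro x y hxy
    rw [hF, SimpleGraph.ConnectedComponent.map_mk] at hxy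
    have hr := SimpleGraph.ConnectedComponent.exact hxy
    have har : AReach σ I x.1 y.1 := areach_of_reachable hr
    have hxp : x.1 ≠ p := (Finset.mem_erase.mp x.2).1
    have := (areach_erase_of_isolated hiso har hxp).2
    exact SimpleGraph.ConnectedComponent.sound (reachable_of_areach this x.2 y.2)
  have hFnotp : ∀ (x : {i // i ∈ I.erase p}),
      F ((interGraph σ (I.erase p)).connectedComponentMk x) ≠
        (interGraph σ I).connectedComponentMk ⟨p, hp⟩ := by
    intro x hxy
    rw [hF, SimpleGraph.ConnectedComponent.map_mk] at hxy
    have har : AReach σ I x.1 p := areach_of_reachable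
      (SimpleGraph.ConnectedComponent.exact hxy)
    exact (areach_erase_of_isolated hiso har (Finset.mem_erase.mp x.2).1).1 rfl
  have hbij : Function.Bijective g := by
    constructor
    · rintro (c | c) (d | d) hcd
      · refine SimpleGraph.ConnectedComponent.ind₂ (β := fun c d =>
          F c = F d → (Sum.inl c : _ ⊕ Unit) = Sum.inl d) (fun x y hxy => ?_) c d hcd
        exact congrArg Sum.inl (hFinj x y (by simp [hF] at hxy ⊢; exact hxy))
      · exact absurd (by simpa [g] using hcd)
          (SimpleGraph.ConnectedComponent.ind
            (β := fun c => F c ≠ (interGraph σ I).connectedComponentMk ⟨p, hp⟩)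
            (fun x h => hFnotp x h) c)
      · exact absurd (by simpa [g] using hcd.symm)
          (SimpleGraph.ConnectedComponent.ind
            (β := fun c => F c ≠ (interGraph σ I).connectedComponentMk ⟨p, hp⟩)
            (fun x h => hFnotp x h) d)
      · exact congrArg Sum.inr (Subsingleton.elim _ _)
    · refine SimpleGraph.ConnectedComponent.ind (fun x => ?_)
      by_cases hxp : x.1 = p
      · refine ⟨Sum.inr Unit.unit, ?_⟩
        simp only [g, Sum.elim_inr]
        exact congrArg _ (Subtype.ext hxp.symm)
      · refine ⟨Sum.inl ((interGraph σ (I.erase p)).connectedComponentMk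
          ⟨x.1, Finset.mem_erase.mpr ⟨hxp, x.2⟩⟩), ?_⟩
        simp only [g, Sum.elim_inl, hF, SimpleGraph.ConnectedComponent.map_mk]
        rfl
  have := Nat.card_eq_of_bijective g hbij
  rw [Nat.card_sum] at this
  simpa [compCount] using this.symm

lemma compCount_erase_noncut {σ : ι → Finset V} {I : Finset ι} {p : ι}
    (hp : p ∈ I) (hq : ∃ q ∈ I.erase p, (σ p ∩ σ q).Nonempty)
    (H : ∀ a ∈ I.erase p, ∀ b ∈ I.erase p, AReach σ I a b → AReach σ (I.erase p) a b) :
    compCount σ I = compCount σ (I.erase p) := by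
  classical
  set F := SimpleGraph.ConnectedComponent.map (inclHom σ I p) with hF
  have hbij : Function.Bijective F := by
    constructor
    · intro c d
      refine SimpleGraph.ConnectedComponent.ind₂ (β := fun c d => F c = F d → c = d)
        (fun x y hxy => ?_) c d
      rw [hF, SimpleGraph.ConnectedComponent.map_mk, SimpleGraph.ConnectedComponent.map_mk]
        at hxy
      have har : AReach σ I x.1 y.1 := areach_of_reachable
        (SimpleGraph.ConnectedComponent.exact hxy)
      exact SimpleGraph.ConnectedComponent.sound
        (reachable_of_areach (H x.1 x.2 y.1 y.2 har) x.2 y.2)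
    · refine SimpleGraph.ConnectedComponent.ind (fun x => ?_)
      by_cases hxp : x.1 = p
      · obtain ⟨q, hqI, hqσ⟩ := hq
        refine ⟨(interGraph σ (I.erase p)).connectedComponentMk ⟨q, hqI⟩, ?_⟩
        rw [hF, SimpleGraph.ConnectedComponent.map_mk]
        refine SimpleGraph.ConnectedComponent.sound (SimpleGraph.Adj.reachable ?_)
        refine ⟨fun he => (Finset.mem_erase.mp hqI).1 ?_, ?_⟩
        · have h5 := congrArg Subtype.val he
          simp [hxp] at h5; exact h5
        · have h6 := hqσ
          rw [Finset.inter_comm] at h6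
          show (σ q ∩ σ x.1).Nonempty
          rwa [hxp]
      · refine ⟨(interGraph σ (I.erase p)).connectedComponentMk
          ⟨x.1, Finset.mem_erase.mpr ⟨hxp, x.2⟩⟩, ?_⟩
        rw [hF, SimpleGraph.ConnectedComponent.map_mk]
        rfl
  exact (Nat.card_eq_of_bijective F hbij).symm

end Aux2

section Aux3

open SimpleGraph Relation

variable {ι V : Type*} [DecidableEq ι] [DecidableEq V]

lemma walk_to_areach {σ : ι → Finset V} {I : Finset ι} {p : {i // i ∈ I}} :
    ∀ {a b : {i // i ∈ I}} (w : (interGraph σ I).Walk a b), p ∉ w.support →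
      AReach σ (I.erase p.1) a.1 b.1 := by
  intro a b w
  induction w with
  | nil =>
    intro _
    exact Relation.ReflTransGen.refl
  | @cons x y z hadj w' ih =>
    intro hsup
    rw [SimpleGraph.Walk.support_cons, List.mem_cons] at hsup
    push_neg at hsup
    obtain ⟨hxp, hsup⟩ := hsup
    have hyp : p ∉ w'.support := hsup
    have hy : y ∈ w'.support := SimpleGraph.Walk.start_mem_support w'
    have hxe : x.1 ∈ I.erase p.1 :=
      Finset.mem_erase.mpr ⟨fun he => hxp ((Subtype.ext he).symm), x.2⟩
    have hye : y.1 ∈ I.erase p.1 :=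
      Finset.mem_erase.mpr
        ⟨fun he => hyp (by rw [show p = y from (Subtype.ext he).symm]; exact hy), y.2⟩
    exact Relation.ReflTransGen.head
      ⟨hxe, hye, fun he => hadj.1 (Subtype.ext he), hadj.2⟩ (ih hyp)

lemma exists_good_vertex (σ : ι → Finset V) (I : Finset ι)
    {u v : ι} (hu : u ∈ I) (hv : v ∈ I) (huv : u ≠ v) (hσuv : (σ u ∩ σ v).Nonempty) :
    ∃ p ∈ I, (∃ q ∈ I.erase p, (σ p ∩ σ q).Nonempty) ∧
      ∀ a ∈ I.erase p, ∀ b ∈ I.erase p, AReach σ I a b → AReach σ (I.erase p) a b := by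
  classical
  set G := interGraph σ I with hG
  set U : {i // i ∈ I} := ⟨u, hu⟩ with hU
  set Vv : {i // i ∈ I} := ⟨v, hv⟩ with hVv
  have hadj : G.Adj U Vv := ⟨fun he => huv (congrArg Subtype.val he), hσuv⟩
  let S : Finset {i // i ∈ I} := Finset.univ.filter (fun x => G.Reachable U x)
  have hUS : U ∈ S := by
    simp only [S, Finset.mem_filter, Finset.mem_univ, true_and]
    exact SimpleGraph.Reachable.refl U
  obtain ⟨p, hpS, hpmax⟩ := S.exists_max_image (fun x => G.dist U x) ⟨U, hUS⟩
  have hreach : G.Reachable U p := (Finset.mem_filter.mp hpS).2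
  have hVS : Vv ∈ S := by
    simp only [S, Finset.mem_filter, Finset.mem_univ, true_and]
    exact hadj.reachable
  have hdVpos : 0 < G.dist U Vv := hadj.reachable.pos_dist_of_ne
    (fun he => huv (congrArg Subtype.val he))
  have hdppos : 0 < G.dist U p := lt_of_lt_of_le hdVpos (hpmax Vv hVS)
  have hpU : p ≠ U := by
    rintro rfl
    rw [SimpleGraph.dist_self] at hdppos
    exact Nat.lt_irrefl 0 hdppos
  -- every reachable vertex other than p can be reached avoiding p
  have avoid : ∀ x : {i // i ∈ I}, G.Reachable U x → x ≠ p →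
      AReach σ (I.erase p.1) U.1 x.1 := by
    intro x hx hxp
    obtain ⟨w, hw⟩ := hx.exists_walk_length_eq_dist
    have hps : p ∉ w.support := by
      intro hpsup
      have h1 : G.dist U p ≤ (w.takeUntil p hpsup).length :=
        SimpleGraph.dist_le _
      have h2 : (w.takeUntil p hpsup).length + (w.dropUntil p hpsup).length
          = w.length := by
        have h3 := congrArg SimpleGraph.Walk.length (w.take_spec hpsup)
        rwa [SimpleGraph.Walk.length_append] at h3
      have hxle : G.dist U x ≤ G.dist U p := hpmax x (by
        simp only [S, Finset.mem_filter, Finset.mem_univ, true_and]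
        exact hx)
      have h0 : (w.dropUntil p hpsup).length = 0 := by omega
      exact hxp (SimpleGraph.Walk.eq_of_length_eq_zero h0).symm
    exact walk_to_areach w hps
  -- p has a neighbour
  have hqex : ∃ q ∈ I.erase p.1, (σ p.1 ∩ σ q).Nonempty := by
    have hrp : Relation.ReflTransGen G.Adj p U := by
      rw [← SimpleGraph.reachable_iff_reflTransGen]
      exact hreach.symm
    rcases (Relation.ReflTransGen.cases_head hrp) with he | ⟨c, hc, _⟩
    · exact absurd he hpU
    · refine ⟨c.1, Finset.mem_erase.mpr ⟨fun he => hc.1 (Subtype.ext he).symm, c.2⟩, ?_⟩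
      exact hc.2
  refine ⟨p.1, p.2, hqex, ?_⟩
  intro a ha b hb hab
  have haI : a ∈ I := Finset.mem_of_mem_erase ha
  have hbI : b ∈ I := Finset.mem_of_mem_erase hb
  have hap : a ≠ p.1 := (Finset.mem_erase.mp ha).1
  have hbp : b ≠ p.1 := (Finset.mem_erase.mp hb).1
  by_cases hAp : AReach σ I a p.1
  · -- a (and b) lie in the component of p, i.e. of u
    have hAr : G.Reachable ⟨a, haI⟩ p := by
      have := reachable_of_areach hAp haI p.2
      convert this
    have hUa : G.Reachable U ⟨a, haI⟩ := hreach.trans hAr.symm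
    have hUb : G.Reachable U ⟨b, hbI⟩ :=
      hUa.trans (reachable_of_areach hab haI hbI)
    have h1 := avoid ⟨a, haI⟩ hUa (fun he => hap (congrArg Subtype.val he))
    have h2 := avoid ⟨b, hbI⟩ hUb (fun he => hbp (congrArg Subtype.val he))
    exact (areach_symm h1).trans h2
  · exact areach_erase_of_not_areach hab hAp hap

end Aux3

section Aux4

open SimpleGraph

variable {ι V : Type*} [DecidableEq ι] [DecidableEq V]

lemma compCount_singleton (σ : ι → Finset V) (p : ι) :
    compCount σ ({p} : Finset ι) = 1 := by
  have hsub : Subsingleton {i // i ∈ ({p} : Finset ι)} :=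
    ⟨fun a b => Subtype.ext (by
      have ha := Finset.mem_singleton.mp a.2
      have hb := Finset.mem_singleton.mp b.2
      rw [ha, hb])⟩
  have h1 : Subsingleton (interGraph σ ({p} : Finset ι)).ConnectedComponent :=
    ⟨SimpleGraph.ConnectedComponent.ind₂ fun v w => by rw [Subsingleton.elim v w]⟩
  have h2 : Nonempty (interGraph σ ({p} : Finset ι)).ConnectedComponent :=
    ⟨(interGraph σ _).connectedComponentMk ⟨p, Finset.mem_singleton_self p⟩⟩
  exact Nat.card_eq_one_iff_unique.mpr ⟨h1, h2⟩

lemma unionOver_insert (σ : ι → Finset V) (I : Finset ι) (p : ι) :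
    unionOver σ (insert p I) = σ p ∪ unionOver σ I := by
  rw [unionOver, unionOver, Finset.sup_insert, Finset.sup_eq_union]

lemma mem_unionOver {σ : ι → Finset V} {I : Finset ι} {x : V} :
    x ∈ unionOver σ I ↔ ∃ i ∈ I, x ∈ σ i := Finset.mem_sup

end Aux4


/-- under property I, `|α_I| = |σ_I| − c(I)` for every nonempty `I`. -/
theorem stmt_0 {n r : ℕ} {W : Type*} [DecidableEq W]
    (σ : Fin r → Finset (Fin n)) (α : Fin r → Finset W)
    (h : PropertyI σ α) :
    ∀ I : Finset (Fin r), I.Nonempty →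
      (unionOver α I).card + compCount σ I = (unionOver σ I).card := by
  classical
  intro I
  induction I using Finset.strongInductionOn with
  | _ I IH =>
  intro hI
  by_cases hcard : I.card = 1
  · obtain ⟨p, rfl⟩ := Finset.card_eq_one.mp hcard
    rw [compCount_singleton]
    have h1 := h.1 p
    simp only [unionOver, Finset.sup_singleton]
    omega
  · have h2 : 2 ≤ I.card := by
      have := Finset.card_pos.mpr hI
      omega
    by_cases hiso : ∃ u ∈ I, ∃ v ∈ I, u ≠ v ∧ (σ u ∩ σ v).Nonempty
    · -- non-isolated case: use a non-cut vertex
      obtain ⟨u, hu, v, hv, huv, hσuv⟩ := hiso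
      obtain ⟨p, hp, ⟨q, hqI', hq⟩, H⟩ := exists_good_vertex σ I hu hv huv hσuv
      set I' := I.erase p with hI'
      have hI'ne : I'.Nonempty := ⟨q, hqI'⟩
      have hssub : I' ⊂ I := Finset.erase_ssubset hp
      have hIeq : insert p I' = I := Finset.insert_erase hp
      have hUα : unionOver α I = α p ∪ unionOver α I' := by
        rw [← hIeq, unionOver_insert]
      have hUσ : unionOver σ I = σ p ∪ unionOver σ I' := by
        rw [← hIeq, unionOver_insert]
      have hpI' : p ∉ I' := Finset.notMem_erase p I
      obtain ⟨hemp, hne⟩ := h.2 I' hI'ne p hpI'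
      have hσne : (unionOver σ I' ∩ σ p).Nonempty := by
        obtain ⟨x, hx⟩ := hq
        rw [Finset.mem_inter] at hx
        exact ⟨x, Finset.mem_inter.mpr
          ⟨mem_unionOver.mpr ⟨q, hqI', hx.2⟩, hx.1⟩⟩
      have hcardint := hne hσne
      have hcc : compCount σ I = compCount σ I' :=
        compCount_erase_noncut hp ⟨q, hqI', hq⟩ H
      have hIH := IH I' hssub hI'ne
      have h1 := h.1 p
      have cα := Finset.card_union_add_card_inter (α p) (unionOver α I')
      have cσ := Finset.card_union_add_card_inter (σ p) (unionOver σ I')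
      rw [Finset.inter_comm] at cα cσ
      rw [hUα, hUσ, hcc]
      omega
    · -- fully isolated case: remove any vertex
      push_neg at hiso
      obtain ⟨p, hp⟩ := hI
      set I' := I.erase p with hI'
      have hI'ne : I'.Nonempty := by
        rw [← Finset.card_pos, Finset.card_erase_of_mem hp]
        omega
      have hssub : I' ⊂ I := Finset.erase_ssubset hp
      have hIeq : insert p I' = I := Finset.insert_erase hp
      have hUα : unionOver α I = α p ∪ unionOver α I' := by
        rw [← hIeq, unionOver_insert]
      have hUσ : unionOver σ I = σ p ∪ unionOver σ I' := by
        rw [← hIeq, unionOver_insert]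
      have hpI' : p ∉ I' := Finset.notMem_erase p I
      obtain ⟨hemp, _⟩ := h.2 I' hI'ne p hpI'
      have hσe : unionOver σ I' ∩ σ p = ∅ := by
        rw [Finset.eq_empty_iff_forall_notMem]
        intro x hx
        rw [Finset.mem_inter] at hx
        obtain ⟨q, hqI', hq⟩ := mem_unionOver.mp hx.1
        have hqp : q ≠ p := (Finset.mem_erase.mp hqI').1
        exact Finset.not_nonempty_iff_eq_empty.mpr (hiso q (Finset.mem_of_mem_erase hqI') p hp hqp) ⟨x, Finset.mem_inter.mpr ⟨hq, hx.2⟩⟩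
      have hαe := hemp hσe
      have hcc : compCount σ I = compCount σ I' + 1 := by
        refine compCount_erase_isolated hp hI'ne ?_
        intro q hq hqp hnon
        rw [Finset.inter_comm] at hnon
        exact Finset.not_nonempty_iff_eq_empty.mpr (hiso q hq p hp hqp) hnon
      have hIH := IH I' hssub hI'ne
      have h1 := h.1 p
      have cα := Finset.card_union_add_card_inter (α p) (unionOver α I')
      have cσ := Finset.card_union_add_card_inter (σ p) (unionOver σ I')
      rw [Finset.inter_comm] at cα cσ
      have hσe0 : (unionOver σ I' ∩ σ p).card = 0 := by rw [hσe]; rfl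
      have hαe0 : (unionOver α I' ∩ α p).card = 0 := by rw [hαe]; rfl
      rw [hUα, hUσ, hcc]
      omega
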